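/- Let Z₁, Z₂ ∈ ℝ^{d×n} and suppose ΔR(Z₁, Z₂) = 0, where ΔR is the rate reduction difference measure with parameter ε > 0. Then Col(Z₁) = Col(Z₂). -/

import Mathlib

open Matrix

noncomputable def codingRate {d : ℕ} {m : Type*} [Fintype m] (ε : ℝ)
    (Z : Matrix (Fin d) m ℝ) : ℝ :=
  (1 / 2) * Real.log ((1 + ((d : ℝ) / (Fintype.card m * ε ^ 2)) • (Z * Zᵀ)).det)

noncomputable def deltaR {d n : ℕ} (ε : ℝ) (Z₁ Z₂ : Matrix (Fin d) (Fin n) ℝ) : ℝ :=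
  codingRate ε (fromCols Z₁ Z₂) - (1 / 2) * codingRate ε Z₁ - (1 / 2) * codingRate ε Z₂

noncomputable def sval {d n : ℕ} (A : Matrix (Fin d) (Fin n) ℝ) : Fin n → ℝ :=
  fun p => Real.sqrt ((show (Aᵀ * A).IsHermitian from Matrix.isHermitian_conjTranspose_mul_self A).eigenvalues
    (Tuple.sort ((show (Aᵀ * A).IsHermitian from Matrix.isHermitian_conjTranspose_mul_self A).eigenvalues) p.rev))

noncomputable def colSpan {d n : ℕ} (A : Matrix (Fin d) (Fin n) ℝ) :
    Submodule ℝ (Fin d → ℝ) :=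
  Submodule.span ℝ (Set.range Aᵀ)

/-! ### Auxiliary lemmas -/

/-- If `0 < f i ≤ g i` pointwise and the products agree, then `f = g` pointwise. -/
lemma aux_prod_eq {k : ℕ} {f g : Fin k → ℝ} (hf : ∀ i, 0 < f i)
    (hle : ∀ i, f i ≤ g i) (h : ∏ i, f i = ∏ i, g i) (i : Fin k) : f i = g i := by
  by_contra hne
  have hlt : f i < g i := lt_of_le_of_ne (hle i) hne
  have := Finset.prod_lt_prod (f := f) (g := g) (s := Finset.univ)
    (fun j _ => hf j) (fun j _ => hle j) ⟨i, Finset.mem_univ i, hlt⟩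
  exact absurd h (ne_of_lt this)

/-- Positive scalar multiples of positive semidefinite matrices are positive semidefinite. -/
lemma aux_psd_smul {k : ℕ} {A : Matrix (Fin k) (Fin k) ℝ} (hA : A.PosSemidef)
    {c : ℝ} (hc : 0 ≤ c) : (c • A).PosSemidef := by
  refine ⟨?_, fun x => ?_⟩
  · unfold Matrix.IsHermitian
    rw [conjTranspose_smul, hA.1]
    simp
  · exact (hA.smul hc).2 x

open scoped MatrixOrder

/-- Strict concavity equality case for `det` on positive definite matrices. -/
lemma aux_det_avg {k : ℕ} {P Q : Matrix (Fin k) (Fin k) ℝ}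
    (hP : P.PosDef) (hQ : Q.PosDef)
    (h : (((1:ℝ)/2) • (P + Q)).det ^ 2 = P.det * Q.det) : P = Q := by
  classical
  set S := CFC.sqrt P with hSdef
  have hSh : S.IsHermitian := (CFC.sqrt_nonneg P).posSemidef.1
  have hSS : S * S = P := CFC.sqrt_mul_sqrt_self P hP.posSemidef.nonneg
  have hdetS : S.det * S.det = P.det := by rw [← det_mul, hSS]
  have hPdet : 0 < P.det := hP.det_pos
  have hQdet : 0 < Q.det := hQ.det_pos
  have hdetS0 : S.det ≠ 0 := by
    intro h0
    rw [h0, mul_zero] at hdetS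
    exact hPdet.ne' hdetS.symm
  haveI : Invertible S := invertibleOfIsUnitDet S (Ne.isUnit hdetS0)
  set T := S⁻¹ with hTdef
  have hST : S * T = 1 := mul_inv_of_invertible S
  have hTS : T * S = 1 := inv_mul_of_invertible S
  have hTh : T.IsHermitian := hSh.inv
  set M := T * Q * T with hMdef
  have hMpsd : M.PosSemidef := by
    have := hQ.posSemidef.conjTranspose_mul_mul_same T
    rwa [hTh.eq] at this
  have hMh : M.IsHermitian := hMpsd.1
  -- Q = S * M * S
  have hSMS : S * M * S = Q := by
    rw [hMdef]
    simp only [mul_assoc, hTS, mul_one]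
    rw [← mul_assoc, hST, one_mul]
  -- determinant of M
  have hdetQ : P.det * M.det = Q.det := by
    have h1 : Q.det = S.det * M.det * S.det := by rw [← hSMS, det_mul, det_mul]
    rw [h1, ← hdetS]; ring
  have hMdet : 0 < M.det := by
    have := hdetQ
    nlinarith
  -- the averaged matrix
  have havg : ((1:ℝ)/2) • (P + Q) = S * (((1:ℝ)/2) • (1 + M)) * S := by
    have hPQ : S * ((1 : Matrix (Fin k) (Fin k) ℝ) + M) * S = P + Q := by
      rw [mul_add, add_mul, mul_one, hSS, hSMS]
    rw [mul_smul_comm, smul_mul_assoc, hPQ]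
  have hdet_avg : (((1:ℝ)/2) • (P + Q)).det = P.det * (((1:ℝ)/2) • (1 + M)).det := by
    rw [havg, det_mul, det_mul]
    ring_nf
    rw [← hdetS]
    ring
  -- reduce to det identity for M
  have hkey : (((1:ℝ)/2) • (1 + M)).det ^ 2 = M.det := by
    have h2 := h
    rw [hdet_avg, ← hdetQ] at h2
    have h3 : P.det ^ 2 * ((((1:ℝ)/2) • (1 + M)).det ^ 2) = P.det ^ 2 * M.det := by
      linear_combination h2
    exact mul_left_cancel₀ (pow_ne_zero 2 hPdet.ne') h3
  -- eigenvalues of M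
  set μ := hMh.eigenvalues with hμdef
  have hspec := hMh.spectral_theorem
  rw [Unitary.conjStarAlgAut_apply] at hspec
  set U := (hMh.eigenvectorUnitary : Matrix (Fin k) (Fin k) ℝ) with hUdef
  have hUU : U * star U = 1 := by
    exact Matrix.mem_unitaryGroup_iff.mp hMh.eigenvectorUnitary.2
  have hdet1M : (1 + M).det = ∏ i, (1 + μ i) := by
    have hone : (1 : Matrix (Fin k) (Fin k) ℝ) + M
        = U * (1 + diagonal (RCLike.ofReal ∘ μ)) * star U := by
      rw [mul_add, add_mul, mul_one, hUU, ← hspec]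
    have hdiag : (1 : Matrix (Fin k) (Fin k) ℝ) + diagonal (RCLike.ofReal ∘ μ)
        = diagonal (fun i => 1 + μ i) := by
      rw [← diagonal_one, diagonal_add]
      congr 1
    have hUdet : U.det * (star U).det = 1 := by rw [← det_mul, hUU, det_one]
    rw [hone, hdiag, det_mul, det_mul]
    calc U.det * (diagonal (fun i => 1 + μ i)).det * (star U).det
        = (diagonal (fun i => 1 + μ i)).det * (U.det * (star U).det) := by ring
      _ = ∏ i, (1 + μ i) := by rw [hUdet, mul_one, det_diagonal]
  have hdetM : M.det = ∏ i, μ i := by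
    have := hMh.det_eq_prod_eigenvalues
    simpa using this
  -- product identity
  have hprod : ∏ i, ((1 + μ i)/2)^2 = ∏ i, μ i := by
    have hsmul : (((1:ℝ)/2) • (1 + M)).det = ((1:ℝ)/2)^k * ∏ i, (1 + μ i) := by
      rw [det_smul, hdet1M, Fintype.card_fin]
    rw [← hdetM, ← hkey, hsmul, Finset.prod_pow]
    have h1 : ∏ i, ((1 + μ i)/2) = (∏ i, (1 + μ i)) / 2^k := by
      rw [Finset.prod_div_distrib, Finset.prod_const, Finset.card_univ, Fintype.card_fin]
    rw [h1, div_pow, mul_pow, ← pow_mul, ← pow_mul, one_div, inv_pow]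
    field_simp
  -- positivity of eigenvalues
  have hnonneg : ∀ i, 0 ≤ μ i := hMpsd.eigenvalues_nonneg
  have hpos : ∀ i, 0 < μ i := by
    intro i
    rcases lt_or_eq_of_le (hnonneg i) with h' | h'
    · exact h'
    · exfalso
      have : ∏ j, μ j = 0 := Finset.prod_eq_zero (Finset.mem_univ i) h'.symm
      rw [← hdetM] at this
      exact hMdet.ne' this
  have hle : ∀ i, μ i ≤ ((1 + μ i)/2)^2 := by
    intro i; nlinarith [sq_nonneg (1 - μ i)]
  have hall : ∀ i, μ i = 1 := by
    intro i
    have := aux_prod_eq hpos hle hprod.symm i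
    nlinarith [this]
  -- conclude M = 1
  have hdiag1 : diagonal (RCLike.ofReal ∘ μ) = (1 : Matrix (Fin k) (Fin k) ℝ) := by
    have hfun : RCLike.ofReal ∘ μ = fun _ : Fin k => (1:ℝ) := by
      funext i; simp [hall i]
    rw [hfun]
    exact diagonal_one
  have hM1 : M = 1 := by
    rw [hspec, hdiag1, mul_one, hUU]
  rw [← hSS, ← hSMS, hM1, mul_one]

/-- Equal Gram matrices imply equal column spans. -/
lemma aux_colSpan_eq {d n : ℕ} {Z₁ Z₂ : Matrix (Fin d) (Fin n) ℝ}
    (h : Z₁ * Z₁ᵀ = Z₂ * Z₂ᵀ) : colSpan Z₁ = colSpan Z₂ := by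
  have key : ∀ (Z : Matrix (Fin d) (Fin n) ℝ),
      LinearMap.range (mulVecLin (Z * Zᵀ)) = LinearMap.range (mulVecLin Z) := by
    intro Z
    apply Submodule.eq_of_le_of_finrank_eq
    · rw [mulVecLin_mul]
      exact LinearMap.range_comp_le_range _ _
    · have := Z.rank_self_mul_transpose
      simpa [Matrix.rank] using this
  unfold colSpan
  change Submodule.span ℝ (Set.range Z₁.col) = Submodule.span ℝ (Set.range Z₂.col)
  rw [← Matrix.range_mulVecLin, ← Matrix.range_mulVecLin, ← key Z₁, ← key Z₂, h]

/-- ΔR(Z₁, Z₂) = 0 implies Col(Z₁) = Col(Z₂). -/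
theorem stmt8 {d n : ℕ} (ε : ℝ) (hε : 0 < ε)
    (Z₁ Z₂ : Matrix (Fin d) (Fin n) ℝ) (h : deltaR ε Z₁ Z₂ = 0) :
    colSpan Z₁ = colSpan Z₂ := by
  rcases Nat.eq_zero_or_pos n with hn | hn
  · subst hn
    unfold colSpan
    change Submodule.span ℝ (Set.range Z₁.col) = Submodule.span ℝ (Set.range Z₂.col)
    rw [Set.range_eq_empty, Set.range_eq_empty]
  rcases Nat.eq_zero_or_pos d with hd | hd
  · subst hd
    haveI : Subsingleton (Fin 0 → ℝ) := by infer_instance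
    exact Subsingleton.elim _ _
  -- main case
  apply aux_colSpan_eq
  classical
  set A := Z₁ * Z₁ᵀ with hAdef
  set B := Z₂ * Z₂ᵀ with hBdef
  set c : ℝ := (d : ℝ) / (n * ε ^ 2) with hcdef
  have hc : 0 < c := by
    apply div_pos (by exact_mod_cast hd)
    positivity
  have hApsd : A.PosSemidef := by
    have := posSemidef_self_mul_conjTranspose Z₁
    simpa [hAdef] using this
  have hBpsd : B.PosSemidef := by
    have := posSemidef_self_mul_conjTranspose Z₂
    simpa [hBdef] using this
  set P : Matrix (Fin d) (Fin d) ℝ := 1 + c • A with hPdef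
  set Q : Matrix (Fin d) (Fin d) ℝ := 1 + c • B with hQdef
  have hPpd : P.PosDef := by
    rw [hPdef, add_comm]
    exact Matrix.PosDef.posSemidef_add (aux_psd_smul hApsd hc.le) Matrix.PosDef.one
  have hQpd : Q.PosDef := by
    rw [hQdef, add_comm]
    exact Matrix.PosDef.posSemidef_add (aux_psd_smul hBpsd hc.le) Matrix.PosDef.one
  -- identify the combined matrix
  have hcard : ((Fintype.card (Fin n ⊕ Fin n) : ℝ)) = 2 * n := by
    simp [Fintype.card_sum]
    ring
  have hc2 : (d : ℝ) / ((Fintype.card (Fin n ⊕ Fin n) : ℝ) * ε ^ 2) = c / 2 := by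
    rw [hcard, hcdef, div_div]
    congr 1
    ring
  have hgram : fromCols Z₁ Z₂ * (fromCols Z₁ Z₂)ᵀ = A + B := by
    rw [transpose_fromCols, fromCols_mul_fromRows]
  have hcomb : (1 : Matrix (Fin d) (Fin d) ℝ) + (c/2) • (A + B) = ((1:ℝ)/2) • (P + Q) := by
    rw [hPdef, hQdef]
    module
  have hcombpd : (((1:ℝ)/2) • (P + Q)).PosDef := by
    rw [← hcomb, add_comm]
    exact Matrix.PosDef.posSemidef_add (aux_psd_smul (hApsd.add hBpsd) (by positivity)) Matrix.PosDef.one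
  -- extract determinant equation from h
  unfold deltaR codingRate at h
  rw [hgram, hc2, Fintype.card_fin, hcomb] at h
  set X := (((1:ℝ)/2) • (P + Q)).det with hXdef
  have hXpos : 0 < X := hcombpd.det_pos
  have hPdet : 0 < P.det := hPpd.det_pos
  have hQdet : 0 < Q.det := hQpd.det_pos
  have hlog : Real.log X = (1/2) * Real.log P.det + (1/2) * Real.log Q.det := by
    have hPc : (1 : Matrix (Fin d) (Fin d) ℝ) + c • A = P := rfl
    have hQc : (1 : Matrix (Fin d) (Fin d) ℝ) + c • B = Q := rfl
    rw [hPc, hQc] at h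
    linarith [h]
  have hdet : X ^ 2 = P.det * Q.det := by
    have h2 : Real.log (X ^ 2) = Real.log (P.det * Q.det) := by
      rw [Real.log_pow, Real.log_mul hPdet.ne' hQdet.ne']
      push_cast
      linarith [hlog]
    have := Real.log_injOn_pos (Set.mem_Ioi.mpr (by positivity : (0:ℝ) < X ^ 2))
      (Set.mem_Ioi.mpr (by positivity : (0:ℝ) < P.det * Q.det)) h2
    exact this
  have hPQ : P = Q := aux_det_avg hPpd hQpd hdet
  have : c • A = c • B := by
    have := hPQ
    rw [hPdef, hQdef] at this
    exact add_left_cancel this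
  exact smul_right_injective _ hc.ne' this
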